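/- Let κ be an infinite cardinal and let T' be a family of at most κ pairwise non-isomorphic trees, each of order at most κ and of order at least 2. Then T' packs into K_κ: there exist pairwise edge-disjoint subgraphs of K_κ, one isomorphic to each member of T'. -/

import Mathlib

open Cardinal

universe u

/-- `G` is `κ`-regular: every vertex has degree (neighbourhood cardinality) exactly `κ`. -/
def SimpleGraph.CardRegular {V : Type u} (G : SimpleGraph V) (κ : Cardinal.{u}) : Prop :=
  ∀ v : V, #(G.neighborSet v) = κ

/-- `G` has no isolated vertices. -/
def SimpleGraph.NoIsolatedVerts {V : Type u} (G : SimpleGraph V) : Prop :=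
  ∀ v : V, ∃ w : V, G.Adj v w

/-- A factorization of `G`: a family of spanning subgraphs, pairwise edge-disjoint,
whose edge sets cover `E(G)`. -/
def SimpleGraph.IsFactorization {V : Type u} {ι : Type u} (G : SimpleGraph V)
    (F : ι → SimpleGraph V) : Prop :=
  (∀ i, F i ≤ G) ∧ (Pairwise fun i j => Disjoint (F i).edgeSet (F j).edgeSet) ∧
    (⋃ i, (F i).edgeSet) = G.edgeSet

/-- In the forest `F` rooted at `v₀`, `u` is a child of `w`. -/
def SimpleGraph.IsChild {V : Type u} (F : SimpleGraph V) (v₀ u w : V) : Prop :=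
  F.Adj w u ∧ F.Reachable v₀ u ∧ F.dist v₀ u = F.dist v₀ w + 1

/-- The graph with edges `v_j v_i` for `v_i ∈ C j`, `j < i`. -/
def childGraph {V I : Type u} [LT I] (v : I ≃ V) (C : I → Set V) : SimpleGraph V :=
  SimpleGraph.fromEdgeSet {e | ∃ i j : I, j < i ∧ (v i : V) ∈ C j ∧ e = s(v j, v i)}

/-- Disjoint union of `ι`-many copies of `T`. -/
def copiesGraph (ι : Type u) {W : Type u} (T : SimpleGraph W) : SimpleGraph (ι × W) where
  Adj p q := p.1 = q.1 ∧ T.Adj p.2 q.2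
  symm := ⟨by rintro p q ⟨h1, h2⟩; exact ⟨h1.symm, h2.symm⟩⟩
  loopless := ⟨by rintro p ⟨-, h⟩; exact T.loopless.irrefl _ h⟩

/-- Infinite Gyárfás: every family of at most `κ` pairwise non-isomorphic trees, each of
order at least `2` and at most `κ`, packs into `K_κ`. -/
theorem stmt_8 (κ : Cardinal.{u}) (hκ : ℵ₀ ≤ κ) {ι : Type u} (hι : #ι ≤ κ)
    (W : ι → Type u) (T : ∀ i, SimpleGraph (W i)) (htree : ∀ i, (T i).IsTree)
    (h2 : ∀ i, 2 ≤ #(W i)) (hle : ∀ i, #(W i) ≤ κ)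
    (hnoniso : Pairwise fun i j => IsEmpty ((T i) ≃g (T j))) :
    ∃ F : ∀ i : ι, (⊤ : SimpleGraph κ.ord.ToType).Subgraph,
      (Pairwise fun i j => Disjoint (F i).edgeSet (F j).edgeSet) ∧
      ∀ i, Nonempty ((F i).coe ≃g T i) := by
  have hcard : #(Σ i, W i) ≤ #(κ.ord.ToType) := by
    rw [Cardinal.mk_ord_toType, Cardinal.mk_sigma]
    calc (Cardinal.sum fun i => #(W i)) ≤ Cardinal.sum fun _ : ι => κ :=
          Cardinal.sum_le_sum _ _ hle
      _ = #ι * κ := Cardinal.sum_const' _ _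
      _ ≤ κ * κ := mul_le_mul_left hι κ
      _ = κ := Cardinal.mul_eq_self hκ
  obtain ⟨f⟩ := Cardinal.le_def _ _ |>.mp hcard
  set g : ∀ i, W i → κ.ord.ToType := fun i w => f ⟨i, w⟩ with hg
  have hginj : ∀ i, Function.Injective (g i) := by
    intro i a b h
    have := f.injective h
    simpa using this
  refine ⟨fun i => ⟨Set.range (g i),
    fun x y => ∃ w w', (T i).Adj w w' ∧ x = g i w ∧ y = g i w', ?_, ?_, ?_⟩, ?_, ?_⟩
  · rintro x y ⟨w, w', h, rfl, rfl⟩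
    exact fun hc => h.ne (hginj _ hc)
  · rintro x y ⟨w, w', h, rfl, rfl⟩
    exact ⟨w, rfl⟩
  · refine ⟨?_⟩
    rintro x y ⟨w, w', h, rfl, rfl⟩
    exact ⟨w', w, h.symm, rfl, rfl⟩
  · intro i j hij
    rw [Set.disjoint_left]
    intro e hei hej
    induction e using Sym2.ind with
    | _ x y =>
      rw [SimpleGraph.Subgraph.mem_edgeSet] at hei hej
      obtain ⟨w, w', -, rfl, -⟩ := hei
      obtain ⟨u, u', -, hx, -⟩ := hej
      exact hij (congrArg Sigma.fst (f.injective hx))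
  · intro i
    refine ⟨⟨(Equiv.ofInjective (g i) (hginj i)).symm, ?_⟩⟩
    intro a b
    constructor
    · rintro h
      exact ⟨_, _, h, (Equiv.apply_ofInjective_symm (hginj i) a).symm,
        (Equiv.apply_ofInjective_symm (hginj i) b).symm⟩
    · rintro ⟨w, w', h, ha, hb⟩
      have ha' : (Equiv.ofInjective (g i) (hginj i)).symm a = w := by
        apply (Equiv.ofInjective (g i) (hginj i)).injective
        rw [Equiv.apply_symm_apply]
        exact Subtype.ext ha
      have hb' : (Equiv.ofInjective (g i) (hginj i)).symm b = w' := by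
        apply (Equiv.ofInjective (g i) (hginj i)).injective
        rw [Equiv.apply_symm_apply]
        exact Subtype.ext hb
      rw [ha', hb']
      exact h
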